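/- A cofibration f : A → B between cofibrant objects in a model category C is a weak equivalence if and only if it has the left lifting property with respect to all fibrations between fibrant objects in C. -/
import Mathlib

open CategoryTheory CategoryTheory.Limits

universe w

/-- A class of morphisms closed under retracts. -/
def RetractClosed {C : Type w} [Category C] (P : MorphismProperty C) : Prop :=
  ∀ ⦃A B A' B' : C⦄ (f : A ⟶ B) (f' : A' ⟶ B') (i : A ⟶ A') (r : A' ⟶ A)
    (j : B ⟶ B') (s : B' ⟶ B),
    i ≫ r = 𝟙 A → j ≫ s = 𝟙 B → i ≫ f' = f ≫ j → f' ≫ s = r ≫ f → P f' → P f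

/-- A Quillen model structure on a category: weak equivalences, cofibrations and fibrations,
satisfying two-out-of-three, closure under retracts, lifting and factorization axioms. -/
structure ModelCat (C : Type w) [Category C] where
  W : MorphismProperty C
  Cof : MorphismProperty C
  Fib : MorphismProperty C
  two_out_of_three : W.HasTwoOutOfThreeProperty
  retract_W : RetractClosed W
  retract_Cof : RetractClosed Cof
  retract_Fib : RetractClosed Fib
  lift_left : ∀ ⦃A B X Y : C⦄ (i : A ⟶ B) (p : X ⟶ Y),
    Cof i → W i → Fib p → HasLiftingProperty i p
  lift_right : ∀ ⦃A B X Y : C⦄ (i : A ⟶ B) (p : X ⟶ Y),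
    Cof i → Fib p → W p → HasLiftingProperty i p
  fact_left : ∀ ⦃X Y : C⦄ (f : X ⟶ Y), ∃ (Z : C) (i : X ⟶ Z) (p : Z ⟶ Y),
    Cof i ∧ W i ∧ Fib p ∧ i ≫ p = f
  fact_right : ∀ ⦃X Y : C⦄ (f : X ⟶ Y), ∃ (Z : C) (i : X ⟶ Z) (p : Z ⟶ Y),
    Cof i ∧ Fib p ∧ W p ∧ i ≫ p = f

/-- An object is cofibrant if the map from the initial object is a cofibration. -/
def ModelCat.Cofibrant {C : Type w} [Category C] [Limits.HasInitial C]
    (M : ModelCat C) (X : C) : Prop :=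
  M.Cof (Limits.initial.to X)

/-- An object is fibrant if the map to the terminal object is a fibration. -/
def ModelCat.Fibrant {C : Type w} [Category C] [Limits.HasTerminal C]
    (M : ModelCat C) (X : C) : Prop :=
  M.Fib (Limits.terminal.from X)

/-- Fibrations are closed under composition (retract argument). -/
lemma ModelCat.fib_comp {C : Type w} [Category C] (M : ModelCat C) {X Y Z : C}
    (q : X ⟶ Y) (r : Y ⟶ Z) (hq : M.Fib q) (hr : M.Fib r) : M.Fib (q ≫ r) := by
  obtain ⟨W₀, i₀, p₀, hi₀c, hi₀w, hp₀, hfac⟩ := M.fact_left (q ≫ r)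
  haveI := M.lift_left i₀ q hi₀c hi₀w hq
  haveI := M.lift_left i₀ r hi₀c hi₀w hr
  haveI : HasLiftingProperty i₀ (q ≫ r) := inferInstance
  have sq : CommSq (𝟙 X) i₀ (q ≫ r) p₀ := ⟨by simp [hfac]⟩
  exact M.retract_Fib (q ≫ r) p₀ i₀ sq.lift (𝟙 Z) (𝟙 Z)
    (sq.fac_left) (by simp) (by simp [hfac]) (by simp [sq.fac_right]) hp₀

/-- A cofibration between cofibrant objects in a model category is a weak equivalence if and
only if it has the left lifting property with respect to all fibrations between fibrant
objects. -/
theorem cofibration_between_cofibrants_weq_iff_llp {C : Type w} [Category C]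
    [HasInitial C] [HasTerminal C] (M : ModelCat C) {A B : C} (f : A ⟶ B)
    (hf : M.Cof f) (hA : M.Cofibrant A) (hB : M.Cofibrant B) :
    M.W f ↔
      ∀ ⦃X Y : C⦄ (p : X ⟶ Y), M.Fib p → M.Fibrant X → M.Fibrant Y →
        HasLiftingProperty f p := by
  constructor
  · intro hw X Y p hp _ _
    exact M.lift_left f p hf hw hp
  · intro hllp
    -- fibrant replacement of B
    obtain ⟨RB, iB, pRB, hiBc, hiBw, hpRB, hfac1⟩ := M.fact_left (terminal.from B)
    have hRB : M.Fibrant RB := by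
      have : terminal.from RB = pRB := Subsingleton.elim _ _
      rw [ModelCat.Fibrant, this]; exact hpRB
    -- factor f ≫ iB
    obtain ⟨Z, j, q, hjc, hjw, hq, hfac2⟩ := M.fact_left (f ≫ iB)
    have hZ : M.Fibrant Z := by
      have : terminal.from Z = q ≫ terminal.from RB := Subsingleton.elim _ _
      rw [ModelCat.Fibrant, this]
      exact M.fib_comp q (terminal.from RB) hq hRB
    -- lift f against q
    haveI := hllp q hq hZ hRB
    have sq1 : CommSq j f q iB := ⟨by rw [hfac2]⟩
    set h : B ⟶ Z := sq1.lift with hh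
    have hfl : f ≫ h = j := sq1.fac_left
    have hfr : h ≫ q = iB := sq1.fac_right
    -- lift iB against q to get a section t of q
    haveI := M.lift_left iB q hiBc hiBw hq
    have sq2 : CommSq h iB q (𝟙 RB) := ⟨by simp [hfr]⟩
    set t : RB ⟶ Z := sq2.lift with ht
    have htl : iB ≫ t = h := sq2.fac_left
    have htr : t ≫ q = 𝟙 RB := sq2.fac_right
    -- f ≫ iB is a retract of the weak equivalence j
    have hW1 : M.W (f ≫ iB) :=
      M.retract_W (f ≫ iB) j (𝟙 A) (𝟙 A) t q (by simp) htr
        (by simp [Category.assoc, htl, hfl]) (by simp [hfac2]) hjw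
    exact M.two_out_of_three.of_postcomp f iB hiBw hW1
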